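/- For every b with √2(4-π)/(π-2√2) < b < 4, there exists x in (0,1) such that f_b(x) > arcsin(x), where f_b(x) = (b+2)(sqrt(1+x) - sqrt(1-x))/(b + sqrt(1+x) + sqrt(1-x)). -/

import Mathlib

noncomputable def f (β x : ℝ) : ℝ :=
  (β + 2) * (Real.sqrt (1 + x) - Real.sqrt (1 - x)) /
    (β + Real.sqrt (1 + x) + Real.sqrt (1 - x))

set_option maxHeartbeats 1000000 in
theorem stmt_15 (b : ℝ)
    (hb₁ : Real.sqrt 2 * (4 - Real.pi) / (Real.pi - 2 * Real.sqrt 2) < b) (hb₂ : b < 4) :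
    ∃ x ∈ Set.Ioo (0:ℝ) 1, f b x > Real.arcsin x := by
  have hs2 : Real.sqrt 2 ^ 2 = 2 := Real.sq_sqrt (by norm_num)
  have hs2n : (0:ℝ) ≤ Real.sqrt 2 := Real.sqrt_nonneg 2
  have hpi1 : Real.pi < 3.15 := by
    have := Real.pi_lt_d2
    linarith
  have hpi2 : 3 < Real.pi := Real.pi_gt_three
  have hden : 0 < Real.pi - 2 * Real.sqrt 2 := by nlinarith
  have hb3 : 3 < b := by
    have h3 : (3:ℝ) ≤ Real.sqrt 2 * (4 - Real.pi) / (Real.pi - 2 * Real.sqrt 2) := by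
      rw [le_div_iff₀ hden]
      nlinarith
    linarith
  obtain ⟨t, ht⟩ : ∃ t : ℝ, t = (4 - b) / 4 := ⟨_, rfl⟩
  have htpos : 0 < t := by rw [ht]; linarith
  have htle : t < 1/2 := by rw [ht]; linarith
  have habs : |t| ≤ 1 := by rw [abs_of_pos htpos]; linarith
  have h1 := abs_le.mp (Real.sin_bound habs)
  have h2 := abs_le.mp (Real.cos_bound habs)
  rw [abs_of_pos htpos] at h1 h2
  have hsinl : t - t ^ 3 / 6 - t ^ 4 * (5 / 96) ≤ Real.sin t := by
    nlinarith [h1.1, mul_pos (pow_pos htpos 4) (by linarith : (0:ℝ) < 1 - t)]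
  have hcosu : Real.cos t ≤ 1 - t ^ 2 / 2 + t ^ 4 * (5 / 96) := by linarith [h2.2]
  have hsinpos : 0 < Real.sin t := Real.sin_pos_of_pos_of_le_one htpos (by linarith)
  have hsinlt : Real.sin t < t := Real.sin_lt htpos
  have hcospos : 0 < Real.cos t := Real.cos_pos_of_le_one habs
  have hcosle1 : Real.cos t ≤ 1 := Real.cos_le_one t
  have hcs : Real.sin t < Real.cos t := by nlinarith
  -- x = sin (2t)
  obtain ⟨x, hx⟩ : ∃ x : ℝ, x = Real.sin (2 * t) := ⟨_, rfl⟩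
  have hx2 : x = 2 * Real.sin t * Real.cos t := by rw [hx, Real.sin_two_mul]
  have hxpos : 0 < x := by rw [hx2]; positivity
  have hxlt1 : x < 1 := by
    have := Real.sin_lt (show 0 < 2 * t by linarith)
    rw [← hx] at this
    linarith
  have hpyth : Real.sin t ^ 2 + Real.cos t ^ 2 = 1 := Real.sin_sq_add_cos_sq t
  have hsq1 : 1 + x = (Real.cos t + Real.sin t) ^ 2 := by rw [hx2]; linear_combination -hpyth
  have hsq2 : 1 - x = (Real.cos t - Real.sin t) ^ 2 := by rw [hx2]; linear_combination -hpyth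
  have hr1 : Real.sqrt (1 + x) = Real.cos t + Real.sin t := by
    rw [hsq1, Real.sqrt_sq (by linarith)]
  have hr2 : Real.sqrt (1 - x) = Real.cos t - Real.sin t := by
    rw [hsq2, Real.sqrt_sq (by linarith)]
  have harcsin : Real.arcsin x = 2 * t := by
    rw [hx]
    exact Real.arcsin_sin (by linarith [Real.pi_gt_three]) (by linarith [Real.pi_gt_three])
  refine ⟨x, ⟨hxpos, hxlt1⟩, ?_⟩
  rw [harcsin]
  unfold f
  rw [hr1, hr2]
  have hD : 0 < b + (Real.cos t + Real.sin t) + (Real.cos t - Real.sin t) := by linarith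
  rw [gt_iff_lt, lt_div_iff₀ hD]
  have hu : (0:ℝ) < 4 - b := by linarith
  have hpoly : 2*t*(b + 2*(1 - t^2/2 + t^4*(5/96))) < (b+2)*(2*(t - t^3/6 - t^4*(5/96))) := by
    rw [ht]
    nlinarith [pow_pos hu 4, pow_pos hu 5]
  have e2 := mul_le_mul_of_nonneg_left
    (show b + 2*Real.cos t ≤ b + 2*(1 - t^2/2 + t^4*(5/96)) by linarith)
    (show (0:ℝ) ≤ 2*t by linarith)
  have e1 := mul_le_mul_of_nonneg_left
    (show 2*(t - t^3/6 - t^4*(5/96)) ≤ 2*Real.sin t by linarith)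
    (show (0:ℝ) ≤ b+2 by linarith)
  have hkey : 2 * t * (b + 2 * Real.cos t) < (b + 2) * (2 * Real.sin t) :=
    lt_of_le_of_lt e2 (lt_of_lt_of_le hpoly e1)
  calc 2 * t * (b + (Real.cos t + Real.sin t) + (Real.cos t - Real.sin t))
      = 2 * t * (b + 2 * Real.cos t) := by ring
    _ < (b + 2) * (2 * Real.sin t) := hkey
    _ = (b + 2) * (Real.cos t + Real.sin t - (Real.cos t - Real.sin t)) := by ring
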